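/- Let i, j be integers with 2 ≤ i < j, and set K = ⌊(j−2)/(j−i)⌋. Then the genus of the numerical semigroup Λ_{{i,…,j}} generated by the interval {i, i+1, …, j} equals Σ_{k=1}^{K} (i − 1 − (k−1)(j−i)). -/

import Mathlib

open Pointwise

namespace NumSgpPaper

/-- `S` is a numerical semigroup: an additive submonoid of ℕ with finite complement. -/
structure IsNumSgp (S : Set ℕ) : Prop where
  zero_mem : 0 ∈ S
  add_mem : ∀ ⦃a b : ℕ⦄, a ∈ S → b ∈ S → a + b ∈ S
  cofinite : Sᶜ.Finite

/-- The Frobenius number: the largest gap of `S` (junk value `0` if there are no gaps). -/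
noncomputable def frob (S : Set ℕ) : ℕ := sSup Sᶜ

open Classical in
/-- The conductor: one plus the largest gap, and `0` if there are no gaps (so `c(ℕ) = 0`). -/
noncomputable def conductor (S : Set ℕ) : ℕ := if Sᶜ = ∅ then 0 else frob S + 1

/-- The genus: the number of gaps. -/
noncomputable def genus (S : Set ℕ) : ℕ := Sᶜ.ncard

/-- The multiplicity: the smallest positive element. -/
noncomputable def mult (S : Set ℕ) : ℕ := sInf {n : ℕ | n ∈ S ∧ 0 < n}

/-- The jump: the difference between the second and first positive elements. -/
noncomputable def jump (S : Set ℕ) : ℕ := sInf {n : ℕ | n ∈ S ∧ mult S < n} - mult S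

/-- A minimal generator: a positive element of `S` that is not the sum of
two positive elements of `S`. -/
def IsMinGen (S : Set ℕ) (x : ℕ) : Prop :=
  0 < x ∧ x ∈ S ∧ ¬ ∃ a b : ℕ, 0 < a ∧ 0 < b ∧ a ∈ S ∧ b ∈ S ∧ a + b = x

/-- A right generator: a minimal generator larger than the Frobenius number. -/
def IsRightGen (S : Set ℕ) (x : ℕ) : Prop := IsMinGen S x ∧ frob S < x

/-- A strong generator: a right generator `σ` such that `σ + m(S)` is a minimal
generator of `S \ {σ}`. -/
def IsStrongGen (S : Set ℕ) (σ : ℕ) : Prop :=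
  IsRightGen S σ ∧ IsMinGen (S \ {σ}) (σ + mult S)

/-- `S` is ordinary when its gaps are exactly `{1, …, g(S)}`. -/
def IsOrdinary (S : Set ℕ) : Prop := Sᶜ = Set.Icc 1 (genus S)

/-- The left elements: the elements of `S` smaller than the Frobenius number. -/
def leftEls (S : Set ℕ) : Set ℕ := {x : ℕ | x ∈ S ∧ x < frob S}

/-- The gcd of a set of natural numbers. -/
noncomputable def setGcd (A : Set ℕ) : ℕ :=
  sInf {d : ℕ | (∀ a ∈ A, d ∣ a) ∧ ∀ e : ℕ, (∀ a ∈ A, e ∣ a) → e ∣ d}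

/-- `ω(S)`: the gcd of the left elements of `S`. -/
noncomputable def omega' (S : Set ℕ) : ℕ := setGcd (leftEls S)

/-- The shrinking of `S`: the additive submonoid of ℕ generated by the left
elements divided by their gcd. -/
noncomputable def shrink (S : Set ℕ) : Set ℕ :=
  (AddSubmonoid.closure ((fun x => x / omega' S) '' leftEls S) : AddSubmonoid ℕ)

/-- `T` is a descendant of `S`: a numerical semigroup contained in `S` all of whose
missing elements lie beyond the Frobenius number of `S`. -/
def IsDescendant (S T : Set ℕ) : Prop :=
  IsNumSgp T ∧ T ⊆ S ∧ ∀ x ∈ S \ T, frob S < x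

/-- The pseudo-ordinary semigroup `P_{m,u} = {0, m} ∪ {n : n ≥ m + u}`. -/
def P (m u : ℕ) : Set ℕ := {0, m} ∪ {n : ℕ | m + u ≤ n}

/-- The submonoid of ℕ generated by the interval `{a, …, b}`. -/
def intervalSgp (a b : ℕ) : Set ℕ := (AddSubmonoid.closure (Set.Icc a b) : AddSubmonoid ℕ)


/-- The genus of the semigroup generated by the interval `{i, …, j}` equals
`Σ_{k=1}^{K} (i - 1 - (k-1)(j-i))` where `K = ⌊(j-2)/(j-i)⌋`. -/

lemma mem_between {i j : ℕ} (hi : 1 ≤ i) (hij : i ≤ j) :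
    ∀ k n : ℕ, k * i ≤ n → n ≤ k * j →
    n ∈ (AddSubmonoid.closure (Set.Icc i j) : AddSubmonoid ℕ) := by
  intro k
  induction k with
  | zero => intro n h1 h2; simp at h2; subst h2; exact zero_mem _
  | succ k ih =>
    intro n h1 h2
    have hki : k * i ≤ k * j := Nat.mul_le_mul_left k hij
    have h1' : k * i + i ≤ n := by linarith [h1, Nat.succ_mul k i]
    have h2' : n ≤ k * j + j := by linarith [h2, Nat.succ_mul k j]
    by_cases hc : n - k * i ≤ j
    · have hx : n - k * i ∈ Set.Icc i j := ⟨by omega, hc⟩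
      have hn : n = k * i + (n - k * i) := by omega
      rw [hn]
      exact add_mem (ih _ le_rfl hki) (AddSubmonoid.subset_closure hx)
    · have hn : n = (n - j) + j := by omega
      rw [hn]
      exact add_mem (ih _ (by omega) (by omega)) (AddSubmonoid.subset_closure ⟨hij, le_rfl⟩)

lemma mem_iff {i j : ℕ} (hi : 1 ≤ i) (hij : i ≤ j) (n : ℕ) :
    n ∈ (AddSubmonoid.closure (Set.Icc i j) : AddSubmonoid ℕ) ↔
    ∃ k : ℕ, k * i ≤ n ∧ n ≤ k * j := by
  constructor
  · intro h
    induction h using AddSubmonoid.closure_induction with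
    | mem x hx => exact ⟨1, by simpa using hx.1, by simpa using hx.2⟩
    | zero => exact ⟨0, by simp, by simp⟩
    | add a b _ _ ha hb =>
      obtain ⟨k, hk1, hk2⟩ := ha
      obtain ⟨l, hl1, hl2⟩ := hb
      exact ⟨k + l, by rw [add_mul]; omega, by rw [add_mul]; omega⟩
  · rintro ⟨k, h1, h2⟩
    exact mem_between hi hij k n h1 h2

-- complement description
lemma compl_eq {i j : ℕ} (h2 : 2 ≤ i) (hij : i < j) :
    ((AddSubmonoid.closure (Set.Icc i j) : AddSubmonoid ℕ) : Set ℕ)ᶜ =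
    ((Finset.range ((i - 2) / (j - i) + 1)).biUnion
      (fun k => Finset.Ioo (k * j) (k * i + i)) : Finset ℕ) := by
  have hji : 0 < j - i := by omega
  ext n
  simp only [Set.mem_compl_iff, SetLike.mem_coe, mem_iff (by omega : 1 ≤ i) hij.le,
    Finset.coe_biUnion, Finset.coe_range, Set.mem_iUnion, Finset.mem_coe, Finset.mem_Ioo,
    Set.mem_Iio, not_exists, not_and]
  constructor
  · intro h
    have hn0 : n ≠ 0 := by
      intro h0; exact absurd (h0 ▸ (by simp : (0:ℕ) * i ≤ 0)) (by simpa [h0] using h 0)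
    set k := (n - 1) / j with hk
    have hdm := Nat.div_add_mod (n - 1) j
    rw [← hk, Nat.mul_comm] at hdm
    have hmod := Nat.mod_lt (n - 1) (by omega : 0 < j)
    have hkj : k * j < n := by omega
    have hkj2 : n ≤ (k + 1) * j := by rw [Nat.succ_mul]; omega
    have hki : n < (k + 1) * i := by
      by_contra hcon
      exact h (k + 1) (by omega) hkj2
    have hmul : k * j = k * i + k * (j - i) := by
      rw [← Nat.mul_add]; congr 1; omega
    have hks : k * (j - i) ≤ i - 2 := by
      rw [Nat.succ_mul] at hki; omega
    refine ⟨k, by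
      have := (Nat.le_div_iff_mul_le hji).mpr hks; omega, hkj, by
      rw [Nat.succ_mul] at hki; omega⟩
  · rintro ⟨k, hkK, hk1, hk2⟩ m hm1 hm2
    rcases le_or_gt m k with hmk | hmk
    · have : m * j ≤ k * j := Nat.mul_le_mul hmk le_rfl
      omega
    · have : (k + 1) * i ≤ m * i := Nat.mul_le_mul hmk le_rfl
      rw [Nat.succ_mul] at this; omega


theorem stmt9 (i j : ℕ) (h2 : 2 ≤ i) (hij : i < j) :
    (genus (intervalSgp i j) : ℤ) =
      ∑ k ∈ Finset.Icc 1 ((j - 2) / (j - i)),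
        ((i : ℤ) - 1 - ((k : ℤ) - 1) * ((j : ℤ) - (i : ℤ))) := by
  simp only [genus, intervalSgp]
  have hji : 0 < j - i := by omega
  set K := (i - 2) / (j - i) with hK
  -- the upper index equals K + 1
  have hKj : (j - 2) / (j - i) = K + 1 := by
    have hjj : j - 2 = (i - 2) + (j - i) := by omega
    rw [hjj, Nat.add_div_right _ hji]
  rw [compl_eq h2 hij, Set.ncard_coe_finset]
  have hdisj : ∀ a ∈ Finset.range (K + 1), ∀ b ∈ Finset.range (K + 1), a ≠ b →
      Disjoint (Finset.Ioo (a * j) (a * i + i)) (Finset.Ioo (b * j) (b * i + i)) := by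
    have key : ∀ a b : ℕ, a < b →
        Disjoint (Finset.Ioo (a * j) (a * i + i)) (Finset.Ioo (b * j) (b * i + i)) := by
      intro a b hab
      refine Finset.disjoint_left.mpr fun x hx1 hx2 => ?_
      simp only [Finset.mem_Ioo] at hx1 hx2
      have h1 : (a + 1) * j ≤ b * j := Nat.mul_le_mul hab le_rfl
      have h2 : a * i + i ≤ (a + 1) * j := by rw [Nat.succ_mul]; nlinarith [Nat.mul_le_mul_left a hij.le]
      omega
    intro a _ b _ hab
    rcases hab.lt_or_gt with h | h
    · exact key a b h
    · exact (key b a h).symm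
  rw [Finset.card_biUnion hdisj]
  rw [hKj, ← Finset.Ico_add_one_right_eq_Icc, Finset.sum_Ico_eq_sum_range]
  simp only [Nat.add_sub_cancel, Nat.succ_sub_one]
  push_cast
  refine Finset.sum_congr rfl fun k hk => ?_
  have hkK : k ≤ K := by simpa [Nat.lt_succ_iff] using hk
  have hks : k * (j - i) ≤ i - 2 := (Nat.le_div_iff_mul_le hji).mp (hK ▸ hkK)
  have hmul : k * j = k * i + k * (j - i) := by rw [← Nat.mul_add]; congr 1; omega
  rw [Nat.card_Ioo]
  zify [show k * j ≤ k * i + i by omega, show 1 ≤ k * i + i - k * j by omega]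
  ring


end NumSgpPaper
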